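/- Let ‖·‖ be a seminorm on ℝ^m and let F : ℝ^m → ℝ^m satisfy the contractivity (forward-Euler) condition: for all U, V ∈ ℝ^m and all 0 ≤ τ ≤ τ₀ one has ‖U + τF(U) − (V + τF(V))‖ ≤ ‖U − V‖. Let s ≥ 1, let C > 0, let α be an (s+1)×s real matrix with nonnegative entries, with α_{ij} = 0 whenever j ≥ i (explicitness), and with row sums ∑_j α_{ij} ≤ 1 for every 1 ≤ i ≤ s+1; set v_i = 1 − ∑_j α_{ij}. Fix a step size 0 < τ ≤ C·τ₀ and vectors U, Ũ ∈ ℝ^m and residuals r_1, …, r_{s+1} ∈ ℝ^m. Define recursively Y_i = v_i U + ∑_{j=1}^{i−1} α_{ij}(Y_j + (τ/C)F(Y_j)) and Ỹ_i = v_i Ũ + ∑_{j=1}^{i−1} α_{ij}(Ỹ_j + (τ/C)F(Ỹ_j)) + r_i for i = 1, …, s+1. Then ‖Ỹ_{s+1} − Y_{s+1}‖ ≤ ‖Ũ − U‖ + ∑_{j=1}^{s+1} ‖r_j‖. -/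

import Mathlib

/-- **Theorem 3.1** (no internal error amplification for SSP Runge–Kutta methods).
If `F` is contractive (forward-Euler condition) with respect to a seminorm `N`,
and an explicit SSP Runge–Kutta method with SSP coefficient `C > 0` given in
canonical Shu–Osher form `α` (nonnegative, strictly lower triangular, row sums ≤ 1)
is applied with step size `0 < τ ≤ C·τ₀`, then the perturbed solution satisfies
`N (Z (s+1) − Y (s+1)) ≤ N (V − U) + ∑ N (r j)`. -/
theorem ssp_no_internal_amplification
    (m s : ℕ) (hs : 1 ≤ s)
    (N : Seminorm ℝ (Fin m → ℝ)) (F : (Fin m → ℝ) → (Fin m → ℝ))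
    (τ₀ : ℝ)
    (hF : ∀ (U V : Fin m → ℝ) (τ : ℝ), 0 ≤ τ → τ ≤ τ₀ →
      N (U + τ • F U - (V + τ • F V)) ≤ N (U - V))
    (C : ℝ) (hC : 0 < C)
    (α : Fin (s+1) → Fin s → ℝ)
    (hα0 : ∀ i j, 0 ≤ α i j)
    (hαexp : ∀ (i : Fin (s+1)) (j : Fin s), (i : ℕ) ≤ (j : ℕ) → α i j = 0)
    (hαrow : ∀ i, ∑ j, α i j ≤ 1)
    (v : Fin (s+1) → ℝ) (hv : ∀ i, v i = 1 - ∑ j, α i j)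
    (τ : ℝ) (hτ : 0 < τ) (hτC : τ ≤ C * τ₀)
    (U V : Fin m → ℝ) (r : Fin (s+1) → Fin m → ℝ)
    (Y Z : Fin (s+1) → Fin m → ℝ)
    (hY : ∀ i : Fin (s+1), Y i = v i • U +
      ∑ j : Fin s, if (j : ℕ) < (i : ℕ) then
        α i j • (Y j.castSucc + (τ / C) • F (Y j.castSucc)) else 0)
    (hZ : ∀ i : Fin (s+1), Z i = v i • V +
      (∑ j : Fin s, if (j : ℕ) < (i : ℕ) then
        α i j • (Z j.castSucc + (τ / C) • F (Z j.castSucc)) else 0) + r i) :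
    N (Z (Fin.last s) - Y (Fin.last s)) ≤ N (V - U) + ∑ j, N (r j) := by

  have hτ1 : (0:ℝ) ≤ τ / C := le_of_lt (div_pos hτ hC)
  have hτ2 : τ / C ≤ τ₀ := by
    rw [div_le_iff₀ hC]; linarith [mul_comm τ₀ C]
  have hNVU : (0:ℝ) ≤ N (V - U) := apply_nonneg N _
  have key : ∀ n, ∀ hn : n < s+1,
      N (Z ⟨n, hn⟩ - Y ⟨n, hn⟩) ≤
        N (V - U) + ∑ k : Fin (s+1), (if (k:ℕ) ≤ n then N (r k) else 0) := by
    intro n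
    induction n using Nat.strong_induction_on with
    | _ n ih =>
      intro hn
      set i : Fin (s+1) := ⟨n, hn⟩ with hi
      have hin : (i : ℕ) = n := rfl
      set B : ℝ := N (V - U) + ∑ k : Fin (s+1), (if (k:ℕ) < n then N (r k) else 0) with hB
      have hBnn : 0 ≤ B := by
        apply add_nonneg hNVU
        apply Finset.sum_nonneg
        intro k _
        split <;> [exact apply_nonneg N _; exact le_rfl]
      -- difference formula
      have hdiff : Z i - Y i = v i • (V - U)
          + (∑ j : Fin s, if (j:ℕ) < n then
              α i j • ((Z j.castSucc + (τ/C) • F (Z j.castSucc))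
                      - (Y j.castSucc + (τ/C) • F (Y j.castSucc))) else 0)
          + r i := by
        rw [hZ i, hY i, smul_sub]
        rw [show (∑ j : Fin s, if (j:ℕ) < n then
              α i j • ((Z j.castSucc + (τ/C) • F (Z j.castSucc))
                      - (Y j.castSucc + (τ/C) • F (Y j.castSucc))) else 0)
            = (∑ j : Fin s, if (j:ℕ) < (i:ℕ) then
                α i j • (Z j.castSucc + (τ/C) • F (Z j.castSucc)) else 0)
            - (∑ j : Fin s, if (j:ℕ) < (i:ℕ) then
                α i j • (Y j.castSucc + (τ/C) • F (Y j.castSucc)) else 0) from ?_]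
        · abel
        · rw [← Finset.sum_sub_distrib]
          apply Finset.sum_congr rfl
          intro j _
          by_cases h : (j:ℕ) < n <;> simp [hin, h, smul_sub]
      -- bound each stage difference appearing in the sum
      have hterm : ∀ j : Fin s,
          (if (j:ℕ) < n then
            N (α i j • ((Z j.castSucc + (τ/C) • F (Z j.castSucc))
                      - (Y j.castSucc + (τ/C) • F (Y j.castSucc)))) else 0)
          ≤ (if (j:ℕ) < n then α i j else 0) * B := by
        intro j
        by_cases h : (j:ℕ) < n
        · simp only [h, if_true]
          rw [map_smul_eq_mul, Real.norm_eq_abs, abs_of_nonneg (hα0 i j)]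
          apply mul_le_mul_of_nonneg_left _ (hα0 i j)
          have h1 : N ((Z j.castSucc + (τ/C) • F (Z j.castSucc))
                      - (Y j.castSucc + (τ/C) • F (Y j.castSucc)))
              ≤ N (Z j.castSucc - Y j.castSucc) := hF _ _ _ hτ1 hτ2
          have hjlt : (j:ℕ) < s + 1 := lt_trans j.isLt (Nat.lt_succ_self s)
          have h2 := ih (j:ℕ) h hjlt
          have hcast : j.castSucc = (⟨(j:ℕ), hjlt⟩ : Fin (s+1)) := by
            ext; simp
          rw [hcast]
          refine h1.trans (h2.trans ?_)
          apply add_le_add_right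
          apply Finset.sum_le_sum
          intro k _
          by_cases hk : (k:ℕ) ≤ (j:ℕ)
          · simp only [hk, if_true]
            have : (k:ℕ) < n := lt_of_le_of_lt hk h
            simp [this]
          · simp only [hk, if_false]
            split <;> [exact apply_nonneg N _; exact le_rfl]
        · simp [h]
      -- the sum of coefficients
      have hcoef : (∑ j : Fin s, if (j:ℕ) < n then α i j else 0) = ∑ j, α i j := by
        apply Finset.sum_congr rfl
        intro j _
        by_cases h : (j:ℕ) < n
        · simp [h]
        · simp [h, hαexp i j (by omega)]
      -- main estimate
      have hNZ : N (Z i - Y i) ≤ (v i + ∑ j, α i j) * B + N (r i) := by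
        rw [hdiff]
        refine (map_add_le_add N _ _).trans ?_
        apply add_le_add_left
        refine (map_add_le_add N _ _).trans ?_
        have hv0 : 0 ≤ v i := by rw [hv i]; linarith [hαrow i]
        have e1 : N (v i • (V - U)) ≤ v i * B := by
          rw [map_smul_eq_mul, Real.norm_eq_abs, abs_of_nonneg hv0]
          apply mul_le_mul_of_nonneg_left _ hv0
          rw [hB]
          have : (0:ℝ) ≤ ∑ k : Fin (s+1), (if (k:ℕ) < n then N (r k) else 0) := by
            apply Finset.sum_nonneg; intro k _
            split <;> [exact apply_nonneg N _; exact le_rfl]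
          linarith
        have e2 : N (∑ j : Fin s, if (j:ℕ) < n then
              α i j • ((Z j.castSucc + (τ/C) • F (Z j.castSucc))
                      - (Y j.castSucc + (τ/C) • F (Y j.castSucc))) else 0)
            ≤ (∑ j, α i j) * B := by
          refine (Finset.le_sum_of_subadditive N (map_zero N).le (map_add_le_add N) _ _).trans ?_
          rw [← hcoef, Finset.sum_mul]
          apply Finset.sum_le_sum
          intro j _
          refine le_trans ?_ (hterm j)
          by_cases h : (j:ℕ) < n <;> simp [h]
        rw [add_mul]
        exact add_le_add e1 e2
      rw [hv i] at hNZ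
      have hsum : (∑ k : Fin (s+1), (if (k:ℕ) ≤ n then N (r k) else 0))
          = (∑ k : Fin (s+1), (if (k:ℕ) < n then N (r k) else 0)) + N (r i) := by
        have hterm2 : ∀ k : Fin (s+1), (if (k:ℕ) ≤ n then N (r k) else 0)
            = (if (k:ℕ) < n then N (r k) else 0) + (if k = i then N (r k) else 0) := by
          intro k
          by_cases hk : (k:ℕ) < n
          · have hne : k ≠ i := by
              intro h; rw [h] at hk; exact absurd hk (by simp [hin])
            simp [le_of_lt hk, hk, hne]
          · by_cases hk2 : k = i
            · subst hk2; simp [hin] at hk ⊢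
            · have hne : (k:ℕ) ≠ n := fun h => hk2 (Fin.ext (by simp [h, hin]))
              have hle : ¬ (k:ℕ) ≤ n := by omega
              simp [hle, hk, hk2]
        rw [Finset.sum_congr rfl (fun k _ => hterm2 k), Finset.sum_add_distrib,
          Finset.sum_ite_eq' Finset.univ i (fun k => N (r k))]
        simp
      rw [hsum, ← add_assoc]
      have : (1 - ∑ j, α i j + ∑ j, α i j) * B = B := by ring_nf
      linarith [hNZ, this]
  have hlast := key s (Nat.lt_succ_self s)
  have hfin : Fin.last s = (⟨s, Nat.lt_succ_self s⟩ : Fin (s+1)) := rfl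
  rw [hfin]
  refine hlast.trans ?_
  apply add_le_add_right
  apply le_of_eq
  apply Finset.sum_congr rfl
  intro k _
  simp [Nat.le_of_lt_succ k.isLt]
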